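/- Let μ̂_n(ξ) and μ̂_{n-1}(ξ) denote quantities depending on a randomization variable ξ and on data, and fix ε ≥ 0. If for independent ξ, ξ' ~ Uniform[0,1] (independent of the data) it holds that P(|μ̂_n(ξ)(X) - μ̂_{n-1}(ξ')(X)| > ε) ≤ δ, then using a single shared randomization term, P(|μ̂_n(ξ)(X) - μ̂_{n-1}(ξ)(X)| > 3ε) ≤ 3δ. -/

import Mathlib

open MeasureTheory

/-- If stability holds with independent uniform randomization terms ξ ⊥ ξ'
(P(|μ̂ₙ(ξ)(X) - μ̂ₙ₋₁(ξ')(X)| > ε) ≤ δ), then with a single shared randomization term,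
P(|μ̂ₙ(ξ)(X) - μ̂ₙ₋₁(ξ)(X)| > 3ε) ≤ 3δ. -/
theorem stmt14 {Ω : Type*} [MeasurableSpace Ω] (μ : Measure Ω) [IsProbabilityMeasure μ]
    (f g : Ω → ℝ → ℝ)
    (hf : Measurable (Function.uncurry f)) (hg : Measurable (Function.uncurry g))
    (ε δ : ℝ) (hε : 0 ≤ ε) (hδ : 0 ≤ δ)
    (h : ((μ.prod ((volume.restrict (Set.Icc (0:ℝ) 1)).prod
          (volume.restrict (Set.Icc (0:ℝ) 1))))
        {p | ε < |f p.1 p.2.1 - g p.1 p.2.2|}).toReal ≤ δ) :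
    ((μ.prod (volume.restrict (Set.Icc (0:ℝ) 1)))
        {p | 3 * ε < |f p.1 p.2 - g p.1 p.2|}).toReal ≤ 3 * δ := by
  set ν : Measure ℝ := volume.restrict (Set.Icc (0:ℝ) 1) with hνdef
  have hν1 : IsProbabilityMeasure ν := ⟨by
    rw [hνdef, Measure.restrict_apply MeasurableSet.univ, Set.univ_inter, Real.volume_Icc]
    norm_num⟩
  -- measure-preserving projections
  have mpfst : ∀ {β : Type} [MeasurableSpace β] (κ : Measure β) [IsProbabilityMeasure κ],
      MeasurePreserving (Prod.fst : ℝ × β → ℝ) (ν.prod κ) ν := by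
    intro β _ κ _
    refine ⟨measurable_fst, ?_⟩
    simp
  have mpsnd : ∀ {β : Type} [MeasurableSpace β] (κ : Measure β) [SFinite κ],
      MeasurePreserving (Prod.snd : ℝ × β → β) (ν.prod κ) κ := by
    intro β _ κ _
    refine ⟨measurable_snd, ?_⟩
    simp
  -- the sets
  set A : Set (Ω × ℝ) := {p | 3 * ε < |f p.1 p.2 - g p.1 p.2|} with hAdef
  set H : Set (Ω × ℝ × ℝ) := {p | ε < |f p.1 p.2.1 - g p.1 p.2.2|} with hHdef
  have hA : MeasurableSet A := by
    apply measurableSet_lt measurable_const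
    exact (hf.sub hg).abs
  have hH : MeasurableSet H := by
    apply measurableSet_lt measurable_const
    have h1 : Measurable fun p : Ω × ℝ × ℝ => f p.1 p.2.1 :=
      hf.comp (measurable_fst.prodMk (measurable_fst.comp measurable_snd))
    have h2 : Measurable fun p : Ω × ℝ × ℝ => g p.1 p.2.2 :=
      hg.comp (measurable_fst.prodMk (measurable_snd.comp measurable_snd))
    exact (h1.sub h2).abs
  -- the big product measure
  set P : Measure (Ω × ℝ × ℝ × ℝ) := μ.prod (ν.prod (ν.prod ν)) with hPdef
  -- projections
  have mp1 : MeasurePreserving (fun p : Ω × ℝ × ℝ × ℝ => (p.1, p.2.1)) P (μ.prod ν) :=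
    (MeasurePreserving.id μ).prod (mpfst (ν.prod ν))
  have mp2 : MeasurePreserving (fun p : Ω × ℝ × ℝ × ℝ => (p.1, p.2.1, p.2.2.1))
      P (μ.prod (ν.prod ν)) := by
    have : MeasurePreserving (fun q : ℝ × ℝ × ℝ => (q.1, q.2.1)) (ν.prod (ν.prod ν))
        (ν.prod ν) := (MeasurePreserving.id ν).prod (mpfst ν)
    exact (MeasurePreserving.id μ).prod this
  have mp3 : MeasurePreserving (fun p : Ω × ℝ × ℝ × ℝ => (p.1, p.2.2.2, p.2.2.1))
      P (μ.prod (ν.prod ν)) := by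
    have h3 : MeasurePreserving (fun q : ℝ × ℝ × ℝ => (q.2.2, q.2.1)) (ν.prod (ν.prod ν))
        (ν.prod ν) := Measure.measurePreserving_swap.comp (mpsnd (ν.prod ν))
    exact (MeasurePreserving.id μ).prod h3
  have mp4 : MeasurePreserving (fun p : Ω × ℝ × ℝ × ℝ => (p.1, p.2.2.2, p.2.1))
      P (μ.prod (ν.prod ν)) := by
    have h4a : MeasurePreserving (fun q : ℝ × ℝ × ℝ => (q.1, q.2.2)) (ν.prod (ν.prod ν))
        (ν.prod ν) := (MeasurePreserving.id ν).prod (mpsnd ν)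
    have h4 : MeasurePreserving (fun q : ℝ × ℝ × ℝ => (q.2.2, q.1)) (ν.prod (ν.prod ν))
        (ν.prod ν) := Measure.measurePreserving_swap.comp h4a
    exact (MeasurePreserving.id μ).prod h4
  -- subset inclusion via triangle inequality
  have hsub : (fun p : Ω × ℝ × ℝ × ℝ => (p.1, p.2.1)) ⁻¹' A ⊆
      ((fun p : Ω × ℝ × ℝ × ℝ => (p.1, p.2.1, p.2.2.1)) ⁻¹' H) ∪
      ((fun p : Ω × ℝ × ℝ × ℝ => (p.1, p.2.2.2, p.2.2.1)) ⁻¹' H) ∪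
      ((fun p : Ω × ℝ × ℝ × ℝ => (p.1, p.2.2.2, p.2.1)) ⁻¹' H) := by
    rintro ⟨ω, x, y, z⟩ hp
    simp only [hAdef, Set.mem_preimage, Set.mem_setOf_eq] at hp
    simp only [hHdef, Set.mem_union, Set.mem_preimage, Set.mem_setOf_eq]
    by_contra hc
    push_neg at hc
    obtain ⟨⟨h1, h2⟩, h3⟩ := hc
    have : |f ω x - g ω x| ≤ 3 * ε := by
      have := abs_sub_abs_le_abs_sub (f ω x - g ω x) 0
      calc |f ω x - g ω x|
          = |(f ω x - g ω y) - (f ω z - g ω y) + (f ω z - g ω x)| := by ring_nf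
        _ ≤ |(f ω x - g ω y) - (f ω z - g ω y)| + |f ω z - g ω x| := abs_add_le _ _
        _ ≤ |f ω x - g ω y| + |f ω z - g ω y| + |f ω z - g ω x| := by
            have := abs_sub (f ω x - g ω y) (f ω z - g ω y)
            linarith
        _ ≤ 3 * ε := by linarith
    linarith
  -- measure computations
  have key1 : (μ.prod ν) A = P ((fun p : Ω × ℝ × ℝ × ℝ => (p.1, p.2.1)) ⁻¹' A) :=
    (mp1.measure_preimage hA.nullMeasurableSet).symm
  have keyH : ∀ (q : Ω × ℝ × ℝ × ℝ → Ω × ℝ × ℝ),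
      MeasurePreserving q P (μ.prod (ν.prod ν)) →
      P (q ⁻¹' H) = (μ.prod (ν.prod ν)) H := fun q hq =>
    hq.measure_preimage hH.nullMeasurableSet
  have hbound : (μ.prod ν) A ≤ 3 * (μ.prod (ν.prod ν)) H := by
    rw [key1]
    calc P ((fun p : Ω × ℝ × ℝ × ℝ => (p.1, p.2.1)) ⁻¹' A)
        ≤ P (((fun p : Ω × ℝ × ℝ × ℝ => (p.1, p.2.1, p.2.2.1)) ⁻¹' H) ∪
            ((fun p : Ω × ℝ × ℝ × ℝ => (p.1, p.2.2.2, p.2.2.1)) ⁻¹' H) ∪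
            ((fun p : Ω × ℝ × ℝ × ℝ => (p.1, p.2.2.2, p.2.1)) ⁻¹' H)) :=
          measure_mono hsub
      _ ≤ P ((fun p : Ω × ℝ × ℝ × ℝ => (p.1, p.2.1, p.2.2.1)) ⁻¹' H) +
            P ((fun p : Ω × ℝ × ℝ × ℝ => (p.1, p.2.2.2, p.2.2.1)) ⁻¹' H) +
            P ((fun p : Ω × ℝ × ℝ × ℝ => (p.1, p.2.2.2, p.2.1)) ⁻¹' H) :=
          le_trans (measure_union_le _ _) (by
            exact add_le_add_left (measure_union_le _ _) _)
      _ = 3 * (μ.prod (ν.prod ν)) H := by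
          rw [keyH _ mp2, keyH _ mp3, keyH _ mp4]; ring
  -- convert to reals
  have hfin : (μ.prod (ν.prod ν)) H ≠ ⊤ := measure_ne_top _ _
  calc ((μ.prod ν) A).toReal ≤ (3 * (μ.prod (ν.prod ν)) H).toReal := by
        apply ENNReal.toReal_mono _ hbound
        exact ENNReal.mul_ne_top (by norm_num) hfin
    _ = 3 * ((μ.prod (ν.prod ν)) H).toReal := by
        rw [ENNReal.toReal_mul]; norm_num
    _ ≤ 3 * δ := by linarith [h]
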